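/- Growth of the (A,N) orbital integral: Let f : GL₂(ℂ) → ℂ be continuous and compactly supported. Then for every real ε > 0 there exist constants C, r > 0 such that |M(x, c, f)| ≤ C |x|^{−ε} for all x, c ∈ ℂ ∖ {0} with 0 < |x| ≤ r. -/

import Mathlib

open MeasureTheory Filter Topology Complex
open scoped ENNReal


/-- The multiplicative Haar measure `d×a = dA(a)/|a|²` on `ℂ ∖ {0}`. -/
noncomputable def mulHaar : Measure ℂ :=
  volume.withDensity fun a => ENNReal.ofReal ((‖a‖ ^ 2)⁻¹)

/-- `n(x) = [[1, x], [0, 1]]`. -/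
def nMat (x : ℂ) : Matrix (Fin 2) (Fin 2) ℂ := !![1, x; 0, 1]

/-- `z(c) = [[c, 0], [0, c]]`. -/
def zMat (c : ℂ) : Matrix (Fin 2) (Fin 2) ℂ := !![c, 0; 0, c]

/-- `s(a) = [[a, 0], [0, 1/a]]`. -/
noncomputable def sMat (a : ℂ) : Matrix (Fin 2) (Fin 2) ℂ := !![a, 0; 0, a⁻¹]

/-- `w₀ = [[0, 1], [1, 0]]`. -/
def w0Mat : Matrix (Fin 2) (Fin 2) ℂ := !![0, 1; 1, 0]

/-- The `(A,N)` orbital integral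
`M(x, c, f) = ∫_{ℂ∖{0}} ∫_ℂ f(s(a) z(c) n(x) w₀ n(y)) dA(y) d×a`. -/
noncomputable def Morb (f : Matrix (Fin 2) (Fin 2) ℂ → ℂ) (x c : ℂ) : ℂ :=
  ∫ a in {(0 : ℂ)}ᶜ, (∫ y : ℂ, f (sMat a * zMat c * nMat x * w0Mat * nMat y)) ∂mulHaar

lemma gmat_eq (a c x y : ℂ) :
    sMat a * zMat c * nMat x * w0Mat * nMat y =
      !![a*c*x, a*c*x*y + a*c; a⁻¹*c, a⁻¹*c*y] := by
  simp only [sMat, zMat, nMat, w0Mat, Matrix.mul_fin_two]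
  norm_num

lemma gdet_eq (a c x y : ℂ) (ha : a ≠ 0) :
    (sMat a * zMat c * nMat x * w0Mat * nMat y).det = -(c^2) := by
  rw [gmat_eq, Matrix.det_fin_two_of]
  field_simp
  ring

/-- Bounding an integral of a function supported in a closed ball. -/
lemma norm_integral_le_of_ball (h : ℂ → ℂ) {M ρ : ℝ} (hM : 0 ≤ M) (hρ : 0 ≤ ρ) (z : ℂ)
    (hb : ∀ y, ‖h y‖ ≤ M) (hsup : ∀ y, h y ≠ 0 → y ∈ Metric.closedBall z ρ) :
    ‖∫ y, h y‖ ≤ M * (Real.pi * ρ ^ 2) := by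
  calc ‖∫ y, h y‖ ≤ ∫ y, ‖h y‖ := norm_integral_le_integral_norm _
  _ ≤ ∫ y, Set.indicator (Metric.closedBall z ρ) (fun _ => M) y := by
      refine integral_mono_of_nonneg (ae_of_all _ fun y => norm_nonneg _)
        ((integrable_indicator_iff measurableSet_closedBall).2
          (integrableOn_const measure_closedBall_lt_top.ne)) (ae_of_all _ fun y => ?_)
      by_cases hy : h y = 0
      · simp only [hy, norm_zero]
        exact Set.indicator_nonneg (fun _ _ => hM) y
      · rw [Set.indicator_of_mem (hsup y hy)]
        exact hb y
  _ = (volume (Metric.closedBall z ρ)).toReal • M := integral_indicator_const _ measurableSet_closedBall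
  _ = M * (Real.pi * ρ ^ 2) := by
      rw [Complex.volume_closedBall, smul_eq_mul, ENNReal.toReal_mul, ENNReal.toReal_pow,
        ENNReal.toReal_ofReal hρ, ENNReal.coe_toReal, NNReal.coe_real_pi]
      ring

lemma log_le_rpow_div {u ε : ℝ} (hu : 0 < u) (hε : 0 < ε) : Real.log u ≤ u ^ ε / ε := by
  rw [le_div_iff₀ hε, mul_comm]
  calc ε * Real.log u = Real.log (u ^ ε) := (Real.log_rpow hu ε).symm
  _ ≤ u ^ ε - 1 := Real.log_le_sub_one_of_pos (Real.rpow_pos_of_pos hu ε)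
  _ ≤ u ^ ε := by linarith

set_option maxHeartbeats 1000000

/-- **Growth of the `(A,N)` orbital integral.** For every `ε > 0` there are `C, r > 0` with
`|M(x, c, f)| ≤ C |x|^{−ε}` for all `x, c ≠ 0` with `0 < |x| ≤ r`. -/
theorem AN_orbital_integral_growth (f : Matrix (Fin 2) (Fin 2) ℂ → ℂ)
    (hf : Continuous f) (hcs : HasCompactSupport f) (hGL : tsupport f ⊆ {g | g.det ≠ 0})
    (ε : ℝ) (hε : 0 < ε) :
    ∃ C > (0 : ℝ), ∃ r > (0 : ℝ), ∀ x c : ℂ, x ≠ 0 → c ≠ 0 → ‖x‖ ≤ r →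
      ‖Morb f x c‖ ≤ C * ‖x‖ ^ (-ε) := by
  classical
  obtain ⟨M₀, hM₀⟩ := hcs.exists_bound_of_continuous hf
  set M : ℝ := max M₀ 0 with hMdef
  have hM : ∀ g, ‖f g‖ ≤ M := fun g => (hM₀ g).trans (le_max_left _ _)
  have hM0 : 0 ≤ M := le_max_right _ _
  -- uniform bound on matrix entries over the support
  have hcont : ∀ i j : Fin 2, Continuous fun g : Matrix (Fin 2) (Fin 2) ℂ =>
      ‖g i j‖ := fun i j =>
    continuous_norm.comp ((continuous_apply j).comp (continuous_apply i))
  set m : Matrix (Fin 2) (Fin 2) ℂ → ℝ := fun g =>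
    max (max (‖g 0 0‖) (‖g 0 1‖))
      (max (‖g 1 0‖) (‖g 1 1‖)) with hmdef
  have hmcont : Continuous m := ((hcont 0 0).max (hcont 0 1)).max ((hcont 1 0).max (hcont 1 1))
  obtain ⟨R₀, hR₀⟩ := (IsCompact.image hcs hmcont).bddAbove
  set R : ℝ := max R₀ 1 with hRdef
  have hR1 : (1:ℝ) ≤ R := le_max_right _ _
  have hRpos : (0:ℝ) < R := lt_of_lt_of_le one_pos hR1
  have hR : ∀ g ∈ tsupport f, ∀ i j : Fin 2, ‖g i j‖ ≤ R := by
    intro g hg i j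
    have h1 : m g ≤ R₀ := hR₀ (Set.mem_image_of_mem m hg)
    have h2 : ‖g i j‖ ≤ m g := by
      fin_cases i <;> fin_cases j <;> simp [hmdef, le_max_iff, le_refl]
    exact h2.trans (h1.trans (le_max_left _ _))
  -- lower bound on the determinant over the support
  obtain ⟨d, hdpos, hd⟩ : ∃ d > (0:ℝ), ∀ g ∈ tsupport f, d ≤ ‖g.det‖ := by
    rcases (tsupport f).eq_empty_or_nonempty with hK | hK
    · refine ⟨1, one_pos, fun g hg => ?_⟩
      rw [hK] at hg
      exact absurd hg (Set.notMem_empty g)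
    · obtain ⟨g₀, hg₀, hmin⟩ := IsCompact.exists_isMinOn hcs hK
        ((continuous_norm.comp (continuous_id.matrix_det)).continuousOn)
      exact ⟨‖g₀.det‖, norm_pos_iff.2 (hGL hg₀), fun g hg => hmin hg⟩
  set sd : ℝ := Real.sqrt d with hsddef
  have hsd : 0 < sd := Real.sqrt_pos.2 hdpos
  have hsd2 : sd * sd = d := Real.mul_self_sqrt hdpos.le
  set ρ₀ : ℝ := 2 * R^2 / d with hρ₀def
  have hρ₀ : 0 ≤ ρ₀ := by positivity
  set B : ℝ := M * (Real.pi * ρ₀^2) with hBdef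
  have hB : 0 ≤ B := by positivity
  set C₀ : ℝ := 2 * Real.pi * (B * ((R^2/d) ^ ε / ε)) with hC₀def
  have hC₀ : 0 ≤ C₀ := by positivity
  refine ⟨C₀ + 1, by positivity, min 1 (R^2/d), by positivity, ?_⟩
  intro x c hx hc hxr
  have hax : 0 < ‖x‖ := norm_pos_iff.2 hx
  set lo : ℝ := sd / R with hlodef
  set hi : ℝ := R / (sd * ‖x‖) with hhidef
  have hlo : 0 < lo := by positivity
  have hhi : 0 < hi := by positivity
  have hxRd : ‖x‖ ≤ R^2/d := hxr.trans (min_le_right _ _)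
  have hlohi : lo ≤ hi := by
    rw [hlodef, hhidef, div_le_div_iff₀ hRpos (by positivity)]
    calc sd * (sd * ‖x‖) = d * ‖x‖ := by rw [← mul_assoc, hsd2]
    _ ≤ d * (R^2/d) := mul_le_mul_of_nonneg_left hxRd hdpos.le
    _ = R^2 := by field_simp
    _ = R * R := sq R
  set T : Set ℂ := (fun a : ℂ => ‖a‖) ⁻¹' (Set.Icc lo hi) with hTdef
  have hTmeas : MeasurableSet T := continuous_norm.measurable measurableSet_Icc
  set G : ℂ → ℝ := Set.indicator T (fun _ => B) with hGdef
  -- pointwise bound on the inner integral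
  have hstep : ∀ a : ℂ, a ≠ 0 →
      ‖∫ y : ℂ, f (sMat a * zMat c * nMat x * w0Mat * nMat y)‖ ≤ G a := by
    intro a ha
    by_cases hne : ∃ y : ℂ, f (sMat a * zMat c * nMat x * w0Mat * nMat y) ≠ 0
    swap
    · push_neg at hne
      simp only [hne, integral_zero, norm_zero]
      exact Set.indicator_nonneg (fun _ _ => hB) a
    obtain ⟨y₀, hy₀⟩ := hne
    have haa : 0 < ‖a‖ := norm_pos_iff.2 ha
    have habsc : 0 < ‖c‖ := norm_pos_iff.2 hc
    have hmem : ∀ y : ℂ, f (sMat a * zMat c * nMat x * w0Mat * nMat y) ≠ 0 →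
        (sMat a * zMat c * nMat x * w0Mat * nMat y) ∈ tsupport f :=
      fun y hy => subset_tsupport f hy
    have hK₀ := hmem y₀ hy₀
    have h00 : ‖a*c*x‖ ≤ R := by
      have := hR _ hK₀ 0 0
      rw [gmat_eq] at this
      simpa using this
    have h10 : ‖a⁻¹*c‖ ≤ R := by
      have := hR _ hK₀ 1 0
      rw [gmat_eq] at this
      simpa using this
    have hdc : d ≤ ‖c‖ ^ 2 := by
      have := hd _ hK₀
      rwa [gdet_eq a c x y₀ ha, norm_neg, norm_pow] at this
    have hsc : sd ≤ ‖c‖ := by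
      rw [hsddef]
      calc Real.sqrt d ≤ Real.sqrt (‖c‖ ^ 2) := Real.sqrt_le_sqrt hdc
      _ = ‖c‖ := Real.sqrt_sq (norm_nonneg c)
    have h10' : ‖c‖ ≤ ‖a‖ * R := by
      rw [norm_mul, norm_inv] at h10
      exact (inv_mul_le_iff₀ haa).1 h10
    have h00' : ‖a‖ * ‖c‖ * ‖x‖ ≤ R := by
      rwa [norm_mul, norm_mul] at h00
    have haT : a ∈ T := by
      refine Set.mem_preimage.2 ⟨?_, ?_⟩
      · rw [hlodef, div_le_iff₀ hRpos]
        exact hsc.trans h10'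
      · rw [hhidef, le_div_iff₀ (by positivity)]
        calc ‖a‖ * (sd * ‖x‖)
            ≤ ‖a‖ * (‖c‖ * ‖x‖) := by
              apply mul_le_mul_of_nonneg_left _ haa.le
              exact mul_le_mul_of_nonneg_right hsc hax.le
        _ = ‖a‖ * ‖c‖ * ‖x‖ := by ring
        _ ≤ R := h00'
    rw [hGdef, Set.indicator_of_mem haT]
    set ρ₁ : ℝ := R * ‖a‖ / ‖c‖ with hρ₁def
    set ρ₂ : ℝ := R / (‖a‖ * ‖c‖ * ‖x‖) with hρ₂def
    have hρ₁pos : 0 < ρ₁ := by positivity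
    have hρ₂pos : 0 < ρ₂ := by positivity
    have hy_mem : ∀ y : ℂ, f (sMat a * zMat c * nMat x * w0Mat * nMat y) ≠ 0 →
        ‖y‖ ≤ ρ₁ ∧ ‖y + x⁻¹‖ ≤ ρ₂ := by
      intro y hy
      have hKy := hmem y hy
      have h11 : ‖a⁻¹*c*y‖ ≤ R := by
        have := hR _ hKy 1 1
        rw [gmat_eq] at this
        simpa using this
      have h01 : ‖a*c*x*y + a*c‖ ≤ R := by
        have := hR _ hKy 0 1
        rw [gmat_eq] at this
        simpa using this
      constructor
      · rw [norm_mul, norm_mul, norm_inv, mul_assoc] at h11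
        have h11' : ‖c‖ * ‖y‖ ≤ ‖a‖ * R := (inv_mul_le_iff₀ haa).1 h11
        rw [hρ₁def, le_div_iff₀ habsc]
        calc ‖y‖ * ‖c‖ = ‖c‖ * ‖y‖ := mul_comm _ _
        _ ≤ ‖a‖ * R := h11'
        _ = R * ‖a‖ := mul_comm _ _
      · have key : a*c*x*y + a*c = a*c*x*(y + x⁻¹) := by
          field_simp
        rw [key, norm_mul, norm_mul, norm_mul] at h01
        rw [hρ₂def, le_div_iff₀ (by positivity)]
        calc ‖y + x⁻¹‖ * (‖a‖ * ‖c‖ * ‖x‖)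
            = ‖a‖ * ‖c‖ * ‖x‖ * ‖y + x⁻¹‖ := by ring
        _ ≤ R := h01
    obtain ⟨hy₀1, hy₀2⟩ := hy_mem y₀ hy₀
    have htri : (‖x‖)⁻¹ ≤ ρ₁ + ρ₂ := by
      calc (‖x‖)⁻¹ = ‖x⁻¹‖ := (norm_inv x).symm
      _ = ‖(y₀ + x⁻¹) + (-y₀)‖ := by ring_nf
      _ ≤ ‖y₀ + x⁻¹‖ + ‖-y₀‖ := norm_add_le _ _
      _ = ‖y₀ + x⁻¹‖ + ‖y₀‖ := by rw [norm_neg]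
      _ ≤ ρ₂ + ρ₁ := add_le_add hy₀2 hy₀1
      _ = ρ₁ + ρ₂ := add_comm _ _
    have hprod : ρ₁ * ρ₂ = R^2 / (‖c‖^2 * ‖x‖) := by
      rw [hρ₁def, hρ₂def]
      field_simp
    have hprod_le : 2 * (ρ₁ * ρ₂) ≤ ρ₀ * (‖x‖)⁻¹ := by
      rw [hprod, hρ₀def,
        show (2:ℝ) * (R ^ 2 / (‖c‖ ^ 2 * ‖x‖))
            = 2 * R ^ 2 / (‖c‖ ^ 2 * ‖x‖) by ring,
        show (2 * R ^ 2 / d) * (‖x‖)⁻¹ = 2 * R ^ 2 / (d * ‖x‖) by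
          field_simp]
      gcongr
    have hball : ∃ z : ℂ, ∀ y : ℂ,
        f (sMat a * zMat c * nMat x * w0Mat * nMat y) ≠ 0 → y ∈ Metric.closedBall z ρ₀ := by
      rcases le_total ρ₁ ρ₂ with hcase | hcase
      · have hρ₁ρ₀ : ρ₁ ≤ ρ₀ := by
          have h2 : ρ₁ * (‖x‖)⁻¹ ≤ ρ₁ * (ρ₁ + ρ₂) := mul_le_mul_of_nonneg_left htri hρ₁pos.le
          have h3 : ρ₁ * (ρ₁ + ρ₂) ≤ 2 * (ρ₁ * ρ₂) := by nlinarith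
          have h5 : ρ₁ * (‖x‖)⁻¹ ≤ ρ₀ * (‖x‖)⁻¹ := le_trans h2 (le_trans h3 hprod_le)
          exact le_of_mul_le_mul_right h5 (by positivity)
        refine ⟨0, fun y hy => ?_⟩
        rw [Metric.mem_closedBall, Complex.dist_eq, sub_zero]
        exact le_trans (hy_mem y hy).1 hρ₁ρ₀
      · have hρ₂ρ₀ : ρ₂ ≤ ρ₀ := by
          have h2 : ρ₂ * (‖x‖)⁻¹ ≤ ρ₂ * (ρ₁ + ρ₂) := mul_le_mul_of_nonneg_left htri hρ₂pos.le
          have h3 : ρ₂ * (ρ₁ + ρ₂) ≤ 2 * (ρ₁ * ρ₂) := by nlinarith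
          have h5 : ρ₂ * (‖x‖)⁻¹ ≤ ρ₀ * (‖x‖)⁻¹ := le_trans h2 (le_trans h3 hprod_le)
          exact le_of_mul_le_mul_right h5 (by positivity)
        refine ⟨-x⁻¹, fun y hy => ?_⟩
        rw [Metric.mem_closedBall, Complex.dist_eq, sub_neg_eq_add]
        exact le_trans (hy_mem y hy).2 hρ₂ρ₀
    obtain ⟨z, hz⟩ := hball
    rw [hBdef]
    exact norm_integral_le_of_ball _ hM0 hρ₀ z (fun y => hM _) hz
  -- density as an `ℝ≥0`-valued function
  set dens : ℂ → NNReal := fun a => Real.toNNReal ((‖a‖ ^ 2)⁻¹) with hdensdef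
  have hdens_meas : Measurable dens :=
    ((continuous_norm.pow 2).measurable.inv).real_toNNReal
  have hmul : mulHaar = volume.withDensity (fun a => (dens a : ℝ≥0∞)) := rfl
  set φ : ℝ → ℝ := Set.indicator (Set.Icc lo hi) (fun s => (s^2)⁻¹ * B) with hφdef
  have hφmeas : Measurable φ :=
    (((measurable_id.pow_const 2).inv).mul_const B).indicator measurableSet_Icc
  have hpt : ∀ a : ℂ, (dens a : NNReal) • G a = φ ‖a‖ := by
    intro a
    by_cases hmem : a ∈ T
    · have hmem' : ‖a‖ ∈ Set.Icc lo hi := by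
        exact hmem
      rw [hGdef, Set.indicator_of_mem hmem, hφdef, Set.indicator_of_mem hmem', NNReal.smul_def,
        Real.coe_toNNReal _ (by positivity), smul_eq_mul]
    · have hmem' : ‖a‖ ∉ Set.Icc lo hi := by
        exact hmem
      rw [hGdef, Set.indicator_of_notMem hmem, hφdef, Set.indicator_of_notMem hmem', smul_zero]
  have hmaj : Integrable (fun a : ℂ => φ ‖a‖) volume := by
    apply Integrable.mono'
      (g := Set.indicator (Metric.closedBall (0:ℂ) hi) (fun _ => (lo^2)⁻¹ * B))
      ((integrable_indicator_iff measurableSet_closedBall).2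
        (integrableOn_const measure_closedBall_lt_top.ne))
      ((hφmeas.comp measurable_norm).aestronglyMeasurable)
    refine ae_of_all _ fun a => ?_
    show ‖φ ‖a‖‖ ≤ Set.indicator (Metric.closedBall (0:ℂ) hi) (fun _ => (lo^2)⁻¹ * B) a
    by_cases hmem : ‖a‖ ∈ Set.Icc lo hi
    · have hball : a ∈ Metric.closedBall (0:ℂ) hi := mem_closedBall_zero_iff.2 hmem.2
      have h0 : 0 < ‖a‖ := lt_of_lt_of_le hlo hmem.1
      rw [hφdef, Set.indicator_of_mem hmem,
        Real.norm_of_nonneg (show (0:ℝ) ≤ (‖a‖ ^ 2)⁻¹ * B by positivity),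
        Set.indicator_of_mem hball]
      apply mul_le_mul_of_nonneg_right _ hB
      rw [inv_le_inv₀ (pow_pos h0 2) (pow_pos hlo 2)]
      nlinarith [hmem.1, hlo]
    · rw [hφdef, Set.indicator_of_notMem hmem, norm_zero]
      exact Set.indicator_nonneg (fun _ _ => by positivity) a
  have hGint : Integrable G (mulHaar.restrict {(0:ℂ)}ᶜ) := by
    rw [hmul, restrict_withDensity (measurableSet_singleton (0:ℂ)).compl,
      integrable_withDensity_iff_integrable_smul hdens_meas]
    have h1 : (fun a : ℂ => dens a • G a) = fun a : ℂ => φ ‖a‖ := funext hpt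
    rw [h1]
    exact hmaj.restrict
  have hIoi : ∫ y in Set.Ioi (0:ℝ), y • φ y = B * Real.log (hi / lo) := by
    have h1 : (fun y : ℝ => y • φ y)
        = Set.indicator (Set.Icc lo hi) (fun s => s * ((s^2)⁻¹ * B)) := by
      funext y
      rw [hφdef]
      by_cases hmem : y ∈ Set.Icc lo hi
      · rw [Set.indicator_of_mem hmem, Set.indicator_of_mem hmem, smul_eq_mul]
      · rw [Set.indicator_of_notMem hmem, Set.indicator_of_notMem hmem, smul_zero]
    have hss : Set.Ioi (0:ℝ) ∩ Set.Icc lo hi = Set.Icc lo hi :=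
      Set.inter_eq_self_of_subset_right (fun y hy => lt_of_lt_of_le hlo hy.1)
    rw [h1, setIntegral_indicator measurableSet_Icc, hss,
      setIntegral_congr_fun measurableSet_Icc
        (g := fun s : ℝ => B * s⁻¹) (fun s hs => by
          have hs0 : s ≠ 0 := (lt_of_lt_of_le hlo hs.1).ne'
          show s * ((s ^ 2)⁻¹ * B) = B * s⁻¹
          field_simp),
      MeasureTheory.integral_const_mul, integral_Icc_eq_integral_Ioc,
      ← intervalIntegral.integral_of_le hlohi, integral_inv_of_pos hlo hhi]
  have hhl : hi / lo = R^2 / (d * ‖x‖) := by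
    rw [hhidef, hlodef]
    field_simp
    rw [← hsd2]
    ring
  have hsplit : (R^2 / (d * ‖x‖)) ^ ε = (R^2/d) ^ ε * ‖x‖ ^ (-ε) := by
    rw [show R^2/(d * ‖x‖) = (R^2/d) * (‖x‖)⁻¹ by field_simp,
      Real.mul_rpow (by positivity) (by positivity), Real.rpow_neg hax.le,
      ← Real.inv_rpow hax.le]
  have hMorb : Morb f x c = ∫ a in {(0:ℂ)}ᶜ,
      (∫ y : ℂ, f (sMat a * zMat c * nMat x * w0Mat * nMat y)) ∂mulHaar := rfl
  rw [hMorb]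
  calc ‖∫ a in {(0:ℂ)}ᶜ, (∫ y : ℂ, f (sMat a * zMat c * nMat x * w0Mat * nMat y)) ∂mulHaar‖
      ≤ ∫ a in {(0:ℂ)}ᶜ, ‖∫ y : ℂ, f (sMat a * zMat c * nMat x * w0Mat * nMat y)‖ ∂mulHaar :=
        norm_integral_le_integral_norm _
  _ ≤ ∫ a in {(0:ℂ)}ᶜ, G a ∂mulHaar := by
      refine integral_mono_of_nonneg (ae_of_all _ fun a => norm_nonneg _) hGint ?_
      exact (ae_restrict_iff' (measurableSet_singleton (0:ℂ)).compl).2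
        (ae_of_all _ fun a ha => hstep a ha)
  _ = ∫ a : ℂ, φ ‖a‖ ∂volume := by
      rw [hmul, setIntegral_withDensity_eq_setIntegral_smul hdens_meas _
        (measurableSet_singleton (0:ℂ)).compl, MeasureTheory.restrict_compl_singleton]
      exact integral_congr_ae (ae_of_all _ hpt)
  _ = (Module.finrank ℝ ℂ) • (volume (Metric.ball (0:ℂ) 1)).toReal •
        ∫ y in Set.Ioi (0:ℝ), y ^ (Module.finrank ℝ ℂ - 1) • φ y :=
      integral_fun_norm_addHaar volume φ
  _ = 2 * Real.pi * ∫ y in Set.Ioi (0:ℝ), y • φ y := by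
      have h2 : (fun y : ℝ => y ^ (Module.finrank ℝ ℂ - 1) • φ y) = fun y : ℝ => y • φ y := by
        funext y
        rw [Complex.finrank_real_complex]
        norm_num
      rw [show (∫ y in Set.Ioi (0:ℝ), y ^ (Module.finrank ℝ ℂ - 1) • φ y)
          = ∫ y in Set.Ioi (0:ℝ), y • φ y from congrArg _ h2]
      simp only [Complex.finrank_real_complex, Complex.volume_ball, ENNReal.ofReal_one, one_pow,
        one_mul, ENNReal.coe_toReal, NNReal.coe_real_pi, nsmul_eq_mul, smul_eq_mul,
        Nat.cast_ofNat]
      ring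
  _ = 2 * Real.pi * (B * Real.log (hi / lo)) := by rw [hIoi]
  _ ≤ C₀ * ‖x‖ ^ (-ε) := by
      rw [hhl, hC₀def]
      have hu : (0:ℝ) < R^2 / (d * ‖x‖) := by positivity
      have hlog := log_le_rpow_div hu hε
      rw [hsplit] at hlog
      calc 2 * Real.pi * (B * Real.log (R ^ 2 / (d * ‖x‖)))
          ≤ 2 * Real.pi * (B * ((R^2/d) ^ ε * ‖x‖ ^ (-ε) / ε)) := by
            apply mul_le_mul_of_nonneg_left _ (by positivity)
            exact mul_le_mul_of_nonneg_left hlog hB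
      _ = 2 * Real.pi * (B * ((R ^ 2 / d) ^ ε / ε)) * ‖x‖ ^ (-ε) := by ring
  _ ≤ (C₀ + 1) * ‖x‖ ^ (-ε) := by
      have h0 := Real.rpow_nonneg hax.le (-ε)
      nlinarith
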